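/- (Formal Morse lemma in characteristic ≠ 2.) Let k be a field with char(k) ≠ 2 and f ∈ R = k⟦x₁,…,xₙ⟧ with f ∈ m² and whose homogeneous degree-2 part is f₂ = Σ_{i=1}^r aᵢxᵢ² with a₁,…,a_r ∈ k^×. Then there is a k-algebra automorphism φ of R fixing x_{r+1},…,xₙ such that φ(f) = Σ_{i=1}^r aᵢxᵢ² + h(x_{r+1},…,xₙ), for some h ∈ k⟦x_{r+1},…,xₙ⟧ with h ∈ m³ (i.e., h = 0 or mult(h) ≥ 3). -/

import Mathlib

noncomputable section

open MvPowerSeries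

/-- The maximal ideal of `k⟦x₁,…,xₙ⟧`: series with zero constant term. -/
def mIdeal (k : Type*) [CommRing k] (n : ℕ) : Ideal (MvPowerSeries (Fin n) k) :=
  RingHom.ker (MvPowerSeries.constantCoeff : MvPowerSeries (Fin n) k →+* k)

/-- The homogeneous degree-2 part of a multivariate formal power series. -/
def part2 {k : Type*} [CommRing k] {n : ℕ} (f : MvPowerSeries (Fin n) k) :
    MvPowerSeries (Fin n) k :=
  fun β => if (β.sum fun _ e => e) = 2 then MvPowerSeries.coeff β f else 0

/-- `f` involves only the variables `x_{r+1}, …, xₙ` (indices `≥ r`). -/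
def highVars {k : Type*} [CommRing k] {n : ℕ} (r : ℕ) (f : MvPowerSeries (Fin n) k) : Prop :=
  ∀ β : Fin n →₀ ℕ, MvPowerSeries.coeff β f ≠ 0 → ∀ i : Fin n, (i : ℕ) < r → β i = 0

namespace MorseAux

variable {k : Type*} [CommRing k] {n : ℕ}

/-- total degree of an exponent -/
def degb {n : ℕ} (γ : Fin n →₀ ℕ) : ℕ := γ.sum fun _ e => e

lemma degb_add (p q : Fin n →₀ ℕ) : degb (p + q) = degb p + degb q := by
  unfold degb
  exact Finsupp.sum_add_index' (fun _ => rfl) (fun _ _ _ => rfl)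

lemma degb_zero : degb (0 : Fin n →₀ ℕ) = 0 := by simp [degb]

lemma degb_eq_zero {γ : Fin n →₀ ℕ} (h : degb γ = 0) : γ = 0 := by
  ext i
  unfold degb at h
  rw [Finsupp.sum_fintype _ _ (fun _ => rfl)] at h
  simpa using (Finset.sum_eq_zero_iff.mp h) i (Finset.mem_univ i)

lemma apply_le_degb (γ : Fin n →₀ ℕ) (i : Fin n) : γ i ≤ degb γ := by
  unfold degb
  rw [Finsupp.sum_fintype _ _ (fun _ => rfl)]
  exact Finset.single_le_sum (f := fun j => γ j) (fun _ _ => Nat.zero_le _) (Finset.mem_univ i)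

lemma degb_single (i : Fin n) : degb (Finsupp.single i 1) = 1 := by
  simp [degb, Finsupp.sum_single_index]

/-- The ideal of series of order at least `d`. -/
def Jd (k : Type*) [CommRing k] (n d : ℕ) : Ideal (MvPowerSeries (Fin n) k) where
  carrier := {f | ∀ γ : Fin n →₀ ℕ, degb γ < d → MvPowerSeries.coeff γ f = 0}
  add_mem' := by
    intro a b ha hb γ hγ
    simp [map_add, ha γ hγ, hb γ hγ]
  zero_mem' := by intro γ _; simp
  smul_mem' := by
    intro c f hf γ hγ
    rw [smul_eq_mul, MvPowerSeries.coeff_mul]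
    apply Finset.sum_eq_zero
    intro p hp
    rw [Finset.HasAntidiagonal.mem_antidiagonal] at hp
    have h2 : degb p.2 ≤ degb γ := by
      rw [← hp, degb_add]; omega
    rw [hf p.2 (lt_of_le_of_lt h2 hγ), mul_zero]

lemma mem_Jd {d : ℕ} {f : MvPowerSeries (Fin n) k} :
    f ∈ Jd k n d ↔ ∀ γ : Fin n →₀ ℕ, degb γ < d → MvPowerSeries.coeff γ f = 0 := Iff.rfl

lemma Jd_antitone {a b : ℕ} (h : a ≤ b) : Jd k n b ≤ Jd k n a := by
  intro f hf γ hγ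
  exact hf γ (lt_of_lt_of_le hγ h)

lemma Jd_zero_top : (Jd k n 0 : Ideal (MvPowerSeries (Fin n) k)) = ⊤ := by
  ext f; simp [mem_Jd]

lemma mul_mem_Jd {a b : ℕ} {f g : MvPowerSeries (Fin n) k}
    (hf : f ∈ Jd k n a) (hg : g ∈ Jd k n b) : f * g ∈ Jd k n (a + b) := by
  intro γ hγ
  rw [MvPowerSeries.coeff_mul]
  apply Finset.sum_eq_zero
  intro p hp
  rw [Finset.HasAntidiagonal.mem_antidiagonal] at hp
  have : degb p.1 + degb p.2 = degb γ := by rw [← degb_add, hp]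
  rcases Nat.lt_or_ge (degb p.1) a with h1 | h1
  · rw [hf p.1 h1, zero_mul]
  · rw [hg p.2 (by omega), mul_zero]

lemma pow_mem_Jd {a : ℕ} {f : MvPowerSeries (Fin n) k} (hf : f ∈ Jd k n a) (m : ℕ) :
    f ^ m ∈ Jd k n (a * m) := by
  induction m with
  | zero => simp [Jd_zero_top]
  | succ m ih =>
      rw [pow_succ, Nat.mul_succ]
      exact mul_mem_Jd ih hf

lemma X_mem_Jd (i : Fin n) : (X i : MvPowerSeries (Fin n) k) ∈ Jd k n 1 := by
  intro γ hγ
  rw [MvPowerSeries.coeff_X]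
  have : γ ≠ Finsupp.single i 1 := by
    intro h
    rw [h, degb_single] at hγ; omega
  simp [this]

lemma eq_zero_of_forall_Jd {f : MvPowerSeries (Fin n) k} (h : ∀ d, f ∈ Jd k n d) : f = 0 := by
  ext γ
  simpa using h (degb γ + 1) γ (by omega)

lemma mem_mIdeal_iff {f : MvPowerSeries (Fin n) k} :
    f ∈ mIdeal k n ↔ MvPowerSeries.constantCoeff f = 0 := by
  rfl

lemma mIdeal_eq_Jd_one : mIdeal k n = Jd k n 1 := by
  ext f
  rw [mem_mIdeal_iff, mem_Jd]
  constructor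
  · intro h γ hγ
    have : γ = 0 := degb_eq_zero (by omega)
    rw [this, ← MvPowerSeries.coeff_zero_eq_constantCoeff] at *
    exact h
  · intro h
    rw [← MvPowerSeries.coeff_zero_eq_constantCoeff]
    exact h 0 (by simp [degb_zero])

lemma mIdeal_pow_le_Jd (d : ℕ) : mIdeal k n ^ d ≤ Jd k n d := by
  induction d with
  | zero => rw [pow_zero, Jd_zero_top, Ideal.one_eq_top]
  | succ d ih =>
      rw [pow_succ]
      rw [Ideal.mul_le]
      intro f hf g hg
      have := mul_mem_Jd (ih hf) (mIdeal_eq_Jd_one (k := k) (n := n) ▸ hg)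
      exact this



variable {k : Type*} [CommRing k] {n : ℕ}

lemma sub_add_single {γ : Fin n →₀ ℕ} {i : Fin n} (h : γ i ≠ 0) :
    γ - Finsupp.single i 1 + Finsupp.single i 1 = γ := by
  ext j
  rw [Finsupp.add_apply, Finsupp.tsub_apply]
  have hle : Finsupp.single i 1 j ≤ γ j := by
    rcases eq_or_ne i j with rfl | hne
    · rw [Finsupp.single_eq_same]; omega
    · rw [Finsupp.single_eq_of_ne' hne]; omega
  omega

open Classical in
/-- the quotient part of the splitting: `w i` with `e = ∑_{i<r} X i * w i + e'` -/
def splitW (r : ℕ) (e : MvPowerSeries (Fin n) k) (i : Fin n) : MvPowerSeries (Fin n) k :=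
  fun δ : Fin n →₀ ℕ =>
    if (i : ℕ) < r ∧ ∀ j : Fin n, (j : ℕ) < r → ((δ + Finsupp.single i 1 : Fin n →₀ ℕ) j ≠ 0) → i ≤ j
    then MvPowerSeries.coeff (δ + Finsupp.single i 1) e else 0

open Classical in
/-- the high-variables part of the splitting -/
def splitH (r : ℕ) (e : MvPowerSeries (Fin n) k) : MvPowerSeries (Fin n) k :=
  fun γ : Fin n →₀ ℕ =>
    if ∀ j : Fin n, (j : ℕ) < r → γ j = 0 then MvPowerSeries.coeff γ e else 0

lemma coeff_X_mul' (γ : Fin n →₀ ℕ) (i : Fin n) (g : MvPowerSeries (Fin n) k) :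
    MvPowerSeries.coeff γ (X i * g)
      = if γ i ≠ 0 then MvPowerSeries.coeff (γ - Finsupp.single i 1) g else 0 := by
  rw [X_def, coeff_monomial_mul, one_mul]
  congr 1
  simp [Finsupp.single_le_iff, Nat.one_le_iff_ne_zero]

lemma highVars_splitH (r : ℕ) (e : MvPowerSeries (Fin n) k) : highVars r (splitH r e) := by
  intro β hβ i hi
  by_contra hne
  apply hβ
  show splitH r e β = 0
  unfold splitH
  rw [if_neg]
  push_neg
  exact ⟨i, hi, hne⟩

lemma coeff_splitH (r : ℕ) (e : MvPowerSeries (Fin n) k) (γ : Fin n →₀ ℕ) :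
    MvPowerSeries.coeff γ (splitH r e)
      = if ∀ j : Fin n, (j : ℕ) < r → γ j = 0 then MvPowerSeries.coeff γ e else 0 := rfl

lemma coeff_splitW (r : ℕ) (e : MvPowerSeries (Fin n) k) (i : Fin n) (δ : Fin n →₀ ℕ) :
    MvPowerSeries.coeff δ (splitW r e i)
      = if (i : ℕ) < r ∧ ∀ j : Fin n, (j : ℕ) < r → ((δ + Finsupp.single i 1 : Fin n →₀ ℕ) j ≠ 0) → i ≤ j
        then MvPowerSeries.coeff (δ + Finsupp.single i 1) e else 0 := rfl

/-- The splitting identity. -/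
lemma split_eq (r : ℕ) (e : MvPowerSeries (Fin n) k) :
    e = (∑ i : Fin n, if (i : ℕ) < r then X i * splitW r e i else 0) + splitH r e := by
  ext γ
  rw [map_add, map_sum]
  by_cases hγ : ∀ j : Fin n, (j : ℕ) < r → γ j = 0
  · rw [coeff_splitH, if_pos hγ]
    have hz : ∀ i : Fin n, (MvPowerSeries.coeff γ)
        (if (i : ℕ) < r then X i * splitW r e i else 0) = 0 := by
      intro i
      by_cases hi : (i : ℕ) < r
      · rw [if_pos hi, coeff_X_mul', if_neg]
        simp [hγ i hi]
      · rw [if_neg hi, map_zero]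
    rw [Finset.sum_congr rfl (fun i _ => hz i), Finset.sum_const_zero, zero_add]
  · push_neg at hγ
    obtain ⟨j₀, hj₀r, hj₀⟩ := hγ
    set T : Finset (Fin n) := Finset.univ.filter (fun j : Fin n => (j : ℕ) < r ∧ γ j ≠ 0) with hT
    have hTne : T.Nonempty := ⟨j₀, by simp [hT, hj₀r, hj₀]⟩
    set i₀ := T.min' hTne with hi₀
    have hi₀T : i₀ ∈ T := T.min'_mem hTne
    have hi₀r : (i₀ : ℕ) < r := by simpa [hT] using (Finset.mem_filter.mp hi₀T).2.1
    have hi₀γ : γ i₀ ≠ 0 := by simpa [hT] using (Finset.mem_filter.mp hi₀T).2.2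
    have hmin : ∀ j : Fin n, (j : ℕ) < r → γ j ≠ 0 → i₀ ≤ j := by
      intro j hjr hjγ
      exact T.min'_le j (by simp [hT, hjr, hjγ])
    rw [coeff_splitH, if_neg (by push_neg; exact ⟨j₀, hj₀r, hj₀⟩), add_zero]
    have key : ∀ i : Fin n, (MvPowerSeries.coeff γ)
        (if (i : ℕ) < r then X i * splitW r e i else 0)
        = if i = i₀ then MvPowerSeries.coeff γ e else 0 := by
      intro i
      by_cases hii : i = i₀
      · rw [if_pos hii]
        subst hii
        rw [if_pos (by exact hi₀r), coeff_X_mul', if_pos hi₀γ, coeff_splitW]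
        rw [if_pos, sub_add_single hi₀γ]
        refine ⟨hi₀r, ?_⟩
        intro j hjr hjγ
        rw [sub_add_single hi₀γ] at hjγ
        exact hmin j hjr hjγ
      · rw [if_neg hii]
        by_cases hi : (i : ℕ) < r
        · rw [if_pos hi, coeff_X_mul']
          by_cases hgi : γ i ≠ 0
          · rw [if_pos hgi, coeff_splitW, if_neg]
            rintro ⟨-, hall⟩
            rw [sub_add_single hgi] at hall
            exact hii (le_antisymm (hall i₀ hi₀r hi₀γ) (hmin i hi hgi))
          · rw [if_neg hgi]
        · rw [if_neg hi, map_zero]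
    rw [Finset.sum_congr rfl (fun i _ => key i), Finset.sum_ite_eq' Finset.univ i₀ _,
      if_pos (Finset.mem_univ i₀)]


end MorseAux

namespace MorseAux
variable {k : Type*} [CommRing k] {n : ℕ}

lemma splitW_mem_Jd {q r : ℕ} {e : MvPowerSeries (Fin n) k} (he : e ∈ Jd k n (q + 1))
    (i : Fin n) : splitW r e i ∈ Jd k n q := by
  intro δ hδ
  rw [coeff_splitW]
  split
  · exact he _ (by rw [degb_add, degb_single]; omega)
  · rfl

lemma splitH_mem_Jd {q r : ℕ} {e : MvPowerSeries (Fin n) k} (he : e ∈ Jd k n q) :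
    splitH r e ∈ Jd k n q := by
  intro γ hγ
  rw [coeff_splitH]
  split
  · exact he γ hγ
  · rfl

lemma Jd_le_mIdeal_pow (d : ℕ) : Jd k n d ≤ mIdeal k n ^ d := by
  induction d with
  | zero => simp
  | succ d ih =>
      intro e he
      have hH : splitH n e = 0 := by
        ext γ
        rw [coeff_splitH]
        split
        · rename_i hall
          have : γ = 0 := by
            ext i; exact hall i i.isLt
          rw [this]
          exact he 0 (by rw [degb_zero]; omega)
        · simp
      have hid := split_eq n e
      rw [hH, add_zero] at hid
      rw [hid]
      apply Ideal.sum_mem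
      intro i _
      rw [if_pos i.isLt, pow_succ']
      exact Ideal.mul_mem_mul
        (by rw [mem_mIdeal_iff]; exact MvPowerSeries.constantCoeff_X i)
        (ih (splitW_mem_Jd he i))

/-! ### Substitution -/

section Subst

variable (v : Fin n → MvPowerSeries (Fin n) k)

/-- Degree-truncation of a power series, as a polynomial. -/
def truncD (d : ℕ) (f : MvPowerSeries (Fin n) k) : MvPolynomial (Fin n) k :=
  ∑ β ∈ (Finset.Iic (Finsupp.equivFunOnFinite.symm fun _ : Fin n => d)).filter
      (fun β => degb β < d),
    MvPolynomial.monomial β (MvPowerSeries.coeff β f)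

lemma coeff_truncD {d : ℕ} {f : MvPowerSeries (Fin n) k} (β : Fin n →₀ ℕ) :
    MvPolynomial.coeff β (truncD d f)
      = if degb β < d then MvPowerSeries.coeff β f else 0 := by
  classical
  unfold truncD
  rw [MvPolynomial.coeff_sum]
  rw [Finset.sum_congr rfl (fun γ _ => MvPolynomial.coeff_monomial β γ _)]
  rw [Finset.sum_ite_eq' _ β _]
  by_cases hβ : degb β < d
  · rw [if_pos, if_pos hβ]
    rw [Finset.mem_filter]
    refine ⟨Finset.mem_Iic.mpr ?_, hβ⟩
    rw [Finsupp.le_def]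
    intro i
    simp only [Finsupp.coe_equivFunOnFinite_symm]
    exact le_trans (apply_le_degb β i) (le_of_lt hβ)
  · rw [if_neg hβ, if_neg]
    intro hmem
    exact hβ (Finset.mem_filter.mp hmem).2

lemma coeff_coe_truncD {d : ℕ} {f : MvPowerSeries (Fin n) k} (β : Fin n →₀ ℕ) :
    MvPowerSeries.coeff β ((truncD d f : MvPolynomial (Fin n) k) : MvPowerSeries (Fin n) k)
      = if degb β < d then MvPowerSeries.coeff β f else 0 := by
  rw [MvPolynomial.coeff_coe, coeff_truncD]

lemma support_truncD {d : ℕ} {f : MvPowerSeries (Fin n) k} {β : Fin n →₀ ℕ}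
    (h : β ∈ (truncD d f).support) : degb β < d := by
  by_contra hc
  rw [MvPolynomial.mem_support_iff, coeff_truncD, if_neg hc] at h
  exact h rfl

lemma truncD_add (d : ℕ) (f g : MvPowerSeries (Fin n) k) :
    truncD d (f + g) = truncD d f + truncD d g := by
  apply MvPolynomial.ext
  intro β
  rw [MvPolynomial.coeff_add, coeff_truncD, coeff_truncD, coeff_truncD, map_add]
  split <;> simp

/-- products of powers of elements of `Jd 1`, over a finset -/
lemma prod_pow_mem_Jd_finset (hv1 : ∀ i, v i ∈ Jd k n 1) (β : Fin n →₀ ℕ)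
    (s : Finset (Fin n)) : (∏ i ∈ s, v i ^ β i) ∈ Jd k n (∑ i ∈ s, β i) := by
  induction s using Finset.induction_on with
  | empty => simp [Jd_zero_top]
  | insert j s hnot ih =>
      rw [Finset.prod_insert hnot, Finset.sum_insert hnot]
      have h1 : v j ^ β j ∈ Jd k n (β j) := by
        have := pow_mem_Jd (hv1 j) (β j)
        rwa [one_mul] at this
      exact mul_mem_Jd h1 ih

/-- products of powers of elements of `Jd 1` -/
lemma prod_pow_mem_Jd (hv1 : ∀ i, v i ∈ Jd k n 1) (β : Fin n →₀ ℕ) :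
    (β.prod fun i e => v i ^ e) ∈ Jd k n (degb β) := by
  rw [Finsupp.prod_fintype _ _ (fun i => pow_zero _)]
  have hd : degb β = ∑ i : Fin n, β i := Finsupp.sum_fintype _ _ (fun _ => rfl)
  rw [hd]
  exact prod_pow_mem_Jd_finset v hv1 β Finset.univ

lemma aeval_mem_Jd (hv1 : ∀ i, v i ∈ Jd k n 1) {p : MvPolynomial (Fin n) k} {d : ℕ}
    (hp : ∀ β ∈ p.support, d ≤ degb β) : MvPolynomial.aeval v p ∈ Jd k n d := by
  have h1 : MvPolynomial.aeval v p
      = ∑ β ∈ p.support, MvPolynomial.aeval v (MvPolynomial.monomial β (MvPolynomial.coeff β p)) := by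
    rw [← map_sum]
    exact congrArg _ p.as_sum
  rw [h1]
  apply Ideal.sum_mem
  intro β hβ
  rw [MvPolynomial.aeval_monomial]
  exact Ideal.mul_mem_left _ _ (Jd_antitone (hp β hβ) (prod_pow_mem_Jd v hv1 β))

lemma monomial_eq_C_mul_prod {β : Fin n →₀ ℕ} {c : k} :
    (MvPowerSeries.monomial β c : MvPowerSeries (Fin n) k)
      = C c * β.prod fun i e => (X i : MvPowerSeries (Fin n) k) ^ e := by
  rw [← MvPolynomial.coe_monomial, MvPolynomial.monomial_eq]
  have : ∀ q : MvPolynomial (Fin n) k,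
      (q : MvPowerSeries (Fin n) k) = MvPolynomial.coeToMvPowerSeries.ringHom q :=
    fun _ => rfl
  rw [this, map_mul]
  congr 1
  · rw [← this, MvPolynomial.coe_C]
  · rw [Finsupp.prod, Finsupp.prod, map_prod]
    apply Finset.prod_congr rfl
    intro i _
    rw [map_pow]
    congr 1
    rw [← this, MvPolynomial.coe_X]

lemma pow_sub_pow_mem (hv1 : ∀ i, v i ∈ Jd k n 1) (hv2 : ∀ i, v i - X i ∈ Jd k n 2)
    (i : Fin n) (m : ℕ) : v i ^ m - (X i : MvPowerSeries (Fin n) k) ^ m ∈ Jd k n (m + 1) := by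
  induction m with
  | zero => simp only [pow_zero, sub_self]; exact Ideal.zero_mem _
  | succ m ih =>
      have hid : v i ^ (m + 1) - (X i : MvPowerSeries (Fin n) k) ^ (m + 1)
          = v i * (v i ^ m - X i ^ m) + (v i - X i) * X i ^ m := by ring
      rw [hid]
      apply Ideal.add_mem
      · exact Jd_antitone (by omega) (mul_mem_Jd (hv1 i) ih)
      · have hX : (X i : MvPowerSeries (Fin n) k) ^ m ∈ Jd k n m := by
          have := pow_mem_Jd (X_mem_Jd (k := k) i) m
          rwa [one_mul] at this
        exact Jd_antitone (by omega) (mul_mem_Jd (hv2 i) hX)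

lemma prod_sub_prod_mem (hv1 : ∀ i, v i ∈ Jd k n 1) (hv2 : ∀ i, v i - X i ∈ Jd k n 2)
    (β : Fin n →₀ ℕ) :
    (β.prod fun i e => v i ^ e) - (β.prod fun i e => (X i : MvPowerSeries (Fin n) k) ^ e)
      ∈ Jd k n (degb β + 1) := by
  rw [Finsupp.prod_fintype _ _ (fun i => pow_zero _), Finsupp.prod_fintype _ _ (fun i => pow_zero _)]
  have hd : degb β = ∑ i : Fin n, β i := Finsupp.sum_fintype _ _ (fun _ => rfl)
  rw [hd]
  have claim : ∀ s : Finset (Fin n),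
      (∏ i ∈ s, v i ^ β i) - (∏ i ∈ s, (X i : MvPowerSeries (Fin n) k) ^ β i)
        ∈ Jd k n ((∑ i ∈ s, β i) + 1) := by
    intro s
    induction s using Finset.induction_on with
    | empty => simp only [Finset.prod_empty, sub_self, Finset.sum_empty]; exact Ideal.zero_mem _
    | insert j s hnot ih =>
        rw [Finset.prod_insert hnot, Finset.prod_insert hnot, Finset.sum_insert hnot]
        have hid : v j ^ β j * ∏ i ∈ s, v i ^ β i
            - (X j : MvPowerSeries (Fin n) k) ^ β j * ∏ i ∈ s, (X i : MvPowerSeries (Fin n) k) ^ β i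
            = v j ^ β j * ((∏ i ∈ s, v i ^ β i) - ∏ i ∈ s, (X i : MvPowerSeries (Fin n) k) ^ β i)
              + (v j ^ β j - X j ^ β j) * ∏ i ∈ s, (X i : MvPowerSeries (Fin n) k) ^ β i := by
          ring
        rw [hid]
        apply Ideal.add_mem
        · have h1 : v j ^ β j ∈ Jd k n (β j) := by
            have := pow_mem_Jd (hv1 j) (β j); rwa [one_mul] at this
          exact Jd_antitone (by omega) (mul_mem_Jd h1 ih)
        · have h2 : (∏ i ∈ s, (X i : MvPowerSeries (Fin n) k) ^ β i) ∈ Jd k n (∑ i ∈ s, β i) :=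
            prod_pow_mem_Jd_finset (fun i => (X i : MvPowerSeries (Fin n) k))
              (fun i => X_mem_Jd i) β s
          exact Jd_antitone (by omega) (mul_mem_Jd (pow_sub_pow_mem v hv1 hv2 j (β j)) h2)
  exact claim Finset.univ

lemma aeval_sub_coe_mem (hv1 : ∀ i, v i ∈ Jd k n 1) (hv2 : ∀ i, v i - X i ∈ Jd k n 2)
    {p : MvPolynomial (Fin n) k} {d : ℕ} (hp : ∀ β ∈ p.support, d ≤ degb β) :
    MvPolynomial.aeval v p - (p : MvPowerSeries (Fin n) k) ∈ Jd k n (d + 1) := by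
  have hco : ∀ q : MvPolynomial (Fin n) k,
      (q : MvPowerSeries (Fin n) k) = MvPolynomial.coeToMvPowerSeries.ringHom q := fun _ => rfl
  have h1 : MvPolynomial.aeval v p - (p : MvPowerSeries (Fin n) k)
      = ∑ β ∈ p.support,
          (MvPolynomial.aeval v (MvPolynomial.monomial β (MvPolynomial.coeff β p))
            - ((MvPolynomial.monomial β (MvPolynomial.coeff β p) : MvPolynomial (Fin n) k)
               : MvPowerSeries (Fin n) k)) := by
    rw [Finset.sum_sub_distrib, ← map_sum]
    congr 1
    · exact congrArg _ p.as_sum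
    · rw [hco]
      conv_rhs => rw [Finset.sum_congr rfl (fun β _ => hco _), ← map_sum]
      exact congrArg _ p.as_sum
  rw [h1]
  apply Ideal.sum_mem
  intro β hβ
  rw [MvPolynomial.aeval_monomial, MvPolynomial.coe_monomial, monomial_eq_C_mul_prod]
  have halg : (algebraMap k (MvPowerSeries (Fin n) k)) (MvPolynomial.coeff β p)
      = C (MvPolynomial.coeff β p) := by
    rw [MvPowerSeries.algebraMap_apply]
    congr 1
  rw [halg, ← mul_sub]
  apply Ideal.mul_mem_left
  exact Jd_antitone (by have := hp β hβ; omega) (prod_sub_prod_mem v hv1 hv2 β)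

/-- Substitution of `v` into `f`, defined coefficientwise via truncations. -/
def substFun (f : MvPowerSeries (Fin n) k) : MvPowerSeries (Fin n) k :=
  fun γ : Fin n →₀ ℕ =>
    MvPowerSeries.coeff γ (MvPolynomial.aeval v (truncD (degb γ + 1) f))

lemma coeff_substFun (f : MvPowerSeries (Fin n) k) (γ : Fin n →₀ ℕ) :
    MvPowerSeries.coeff γ (substFun v f)
      = MvPowerSeries.coeff γ (MvPolynomial.aeval v (truncD (degb γ + 1) f)) := rfl

lemma coeff_aeval_truncD_stab (hv1 : ∀ i, v i ∈ Jd k n 1) (f : MvPowerSeries (Fin n) k)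
    {γ : Fin n →₀ ℕ} {D : ℕ} (hD : degb γ < D) :
    MvPowerSeries.coeff γ (MvPolynomial.aeval v (truncD D f))
      = MvPowerSeries.coeff γ (substFun v f) := by
  rw [coeff_substFun]
  -- general claim for D1 ≤ D2 both > degb γ
  have key : ∀ D1 D2 : ℕ, D1 ≤ D2 → degb γ < D1 →
      MvPowerSeries.coeff γ (MvPolynomial.aeval v (truncD D2 f))
        = MvPowerSeries.coeff γ (MvPolynomial.aeval v (truncD D1 f)) := by
    intro D1 D2 h12 h1
    have hsupp : ∀ β ∈ (truncD D2 f - truncD D1 f).support, D1 ≤ degb β := by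
      intro β hβ
      by_contra hc
      push_neg at hc
      rw [MvPolynomial.mem_support_iff, MvPolynomial.coeff_sub, coeff_truncD, coeff_truncD,
        if_pos hc, if_pos (lt_of_lt_of_le hc h12), sub_self] at hβ
      exact hβ rfl
    have hmem := aeval_mem_Jd v hv1 hsupp
    rw [map_sub] at hmem
    have := hmem γ h1
    rw [map_sub] at this
    exact sub_eq_zero.mp this
  rcases le_total (degb γ + 1) D with h | h
  · exact key (degb γ + 1) D h (by omega)
  · exact (key D (degb γ + 1) h hD).symm

lemma truncD_one {d : ℕ} (hd : 1 ≤ d) : truncD d (1 : MvPowerSeries (Fin n) k) = 1 := by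
  classical
  apply MvPolynomial.ext
  intro β
  rw [coeff_truncD, MvPolynomial.coeff_one, MvPowerSeries.coeff_one]
  by_cases hβ : β = 0
  · subst hβ
    rw [if_pos (by rw [degb_zero]; omega)]
  · simp [hβ, Ne.symm]

lemma truncD_zero' (d : ℕ) : truncD d (0 : MvPowerSeries (Fin n) k) = 0 := by
  apply MvPolynomial.ext
  intro β
  rw [coeff_truncD]
  simp

lemma truncD_C {d : ℕ} (hd : 1 ≤ d) (c : k) :
    truncD d (C c : MvPowerSeries (Fin n) k) = MvPolynomial.C c := by
  classical
  apply MvPolynomial.ext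
  intro β
  rw [coeff_truncD, MvPowerSeries.coeff_C, MvPolynomial.coeff_C]
  by_cases hβ : β = 0
  · subst hβ
    rw [if_pos (by rw [degb_zero]; omega)]
  · simp [hβ, Ne.symm]

lemma truncD_X {d : ℕ} (hd : 2 ≤ d) (i : Fin n) :
    truncD d (X i : MvPowerSeries (Fin n) k) = MvPolynomial.X i := by
  classical
  apply MvPolynomial.ext
  intro β
  rw [coeff_truncD, MvPowerSeries.coeff_X]
  by_cases hβ : β = Finsupp.single i 1
  · subst hβ
    rw [if_pos (by rw [degb_single]; omega), if_pos rfl, MvPolynomial.coeff_X', if_pos rfl]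
  · have h1 : MvPolynomial.coeff β (MvPolynomial.X i : MvPolynomial (Fin n) k) = 0 := by
      rw [MvPolynomial.coeff_X', if_neg (fun h => hβ h.symm)]
    rw [h1]
    split <;> simp [hβ]

lemma substFun_add (f g : MvPowerSeries (Fin n) k) :
    substFun v (f + g) = substFun v f + substFun v g := by
  ext γ
  rw [map_add, coeff_substFun, coeff_substFun, coeff_substFun, truncD_add, map_add, map_add]

lemma substFun_zero : substFun v (0 : MvPowerSeries (Fin n) k) = 0 := by
  ext γ
  rw [coeff_substFun, truncD_zero']
  simp

lemma substFun_one : substFun v (1 : MvPowerSeries (Fin n) k) = 1 := by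
  ext γ
  rw [coeff_substFun, truncD_one (by omega)]
  rw [map_one]

lemma substFun_C (c : k) : substFun v (C c) = C c := by
  ext γ
  rw [coeff_substFun, truncD_C (by omega), MvPolynomial.aeval_C, MvPowerSeries.algebraMap_apply]
  congr 1

lemma substFun_X (hv1 : ∀ i, v i ∈ Jd k n 1) (i : Fin n) :
    substFun v (X i : MvPowerSeries (Fin n) k) = v i := by
  ext γ
  rw [coeff_substFun]
  by_cases hγ : degb γ = 0
  · have hγ0 : γ = 0 := degb_eq_zero hγ
    have : truncD (degb γ + 1) (X i : MvPowerSeries (Fin n) k) = 0 := by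
      classical
      apply MvPolynomial.ext
      intro β
      rw [coeff_truncD, hγ, MvPowerSeries.coeff_X, MvPolynomial.coeff_zero]
      split
      · rename_i h
        rw [if_neg (fun hc : β = Finsupp.single i 1 => by rw [hc, degb_single] at h; omega)]
      · rfl
    rw [this, map_zero, hγ0, map_zero]
    exact (hv1 i 0 (by rw [degb_zero]; omega)).symm
  · rw [truncD_X (by omega), MvPolynomial.aeval_X]

lemma substFun_mul (hv1 : ∀ i, v i ∈ Jd k n 1) (f g : MvPowerSeries (Fin n) k) :
    substFun v (f * g) = substFun v f * substFun v g := by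
  classical
  ext γ
  set D := degb γ + 1 with hDdef
  have hsupp : ∀ β ∈ (truncD D (f * g) - truncD D f * truncD D g).support, D ≤ degb β := by
    intro β hβ
    by_contra hc
    push_neg at hc
    apply (MvPolynomial.mem_support_iff.mp hβ)
    rw [MvPolynomial.coeff_sub, coeff_truncD, if_pos hc, MvPolynomial.coeff_mul,
      MvPowerSeries.coeff_mul, sub_eq_zero]
    apply Finset.sum_congr rfl
    intro p hp
    rw [Finset.HasAntidiagonal.mem_antidiagonal] at hp
    have hpd : degb p.1 + degb p.2 = degb β := by rw [← degb_add, hp]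
    rw [coeff_truncD, coeff_truncD, if_pos (by omega), if_pos (by omega)]
  have hmem := aeval_mem_Jd v hv1 hsupp
  rw [map_sub, map_mul] at hmem
  have hz := hmem γ (by omega)
  rw [map_sub] at hz
  have h2 := sub_eq_zero.mp hz
  rw [coeff_substFun, ← hDdef, h2, MvPowerSeries.coeff_mul, MvPowerSeries.coeff_mul]
  apply Finset.sum_congr rfl
  intro p hp
  rw [Finset.HasAntidiagonal.mem_antidiagonal] at hp
  have hpd : degb p.1 + degb p.2 = degb γ := by rw [← degb_add, hp]
  rw [coeff_aeval_truncD_stab v hv1 f (by omega), coeff_aeval_truncD_stab v hv1 g (by omega)]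

/-- Substitution as a `k`-algebra endomorphism of the power series ring. -/
def substHom (hv1 : ∀ i, v i ∈ Jd k n 1) :
    MvPowerSeries (Fin n) k →ₐ[k] MvPowerSeries (Fin n) k where
  toFun := substFun v
  map_one' := substFun_one v
  map_mul' := substFun_mul v hv1
  map_zero' := substFun_zero v
  map_add' := substFun_add v
  commutes' := by
    intro c
    rw [MvPowerSeries.algebraMap_apply]
    show substFun v (C ((algebraMap k k) c)) = _
    rw [substFun_C]

lemma substHom_apply (hv1 : ∀ i, v i ∈ Jd k n 1) (f : MvPowerSeries (Fin n) k) :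
    substHom v hv1 f = substFun v f := rfl

lemma support_truncD_ge {f : MvPowerSeries (Fin n) k} {d D : ℕ} (hf : f ∈ Jd k n d) :
    ∀ β ∈ (truncD D f).support, d ≤ degb β := by
  intro β hβ
  by_contra hc
  push_neg at hc
  apply MvPolynomial.mem_support_iff.mp hβ
  rw [coeff_truncD]
  split
  · exact hf β hc
  · rfl

lemma substFun_mem_Jd (hv1 : ∀ i, v i ∈ Jd k n 1) {f : MvPowerSeries (Fin n) k} {d : ℕ}
    (hf : f ∈ Jd k n d) : substFun v f ∈ Jd k n d := by
  intro γ hγ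
  rw [coeff_substFun]
  exact aeval_mem_Jd v hv1 (support_truncD_ge hf) γ hγ

lemma substFun_sub_self_mem (hv1 : ∀ i, v i ∈ Jd k n 1) (hv2 : ∀ i, v i - X i ∈ Jd k n 2)
    {f : MvPowerSeries (Fin n) k} {d : ℕ} (hf : f ∈ Jd k n d) :
    substFun v f - f ∈ Jd k n (d + 1) := by
  intro γ hγ
  rw [map_sub, coeff_substFun]
  have hfc : MvPowerSeries.coeff γ f = MvPowerSeries.coeff γ
      ((truncD (degb γ + 1) f : MvPolynomial (Fin n) k) : MvPowerSeries (Fin n) k) := by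
    rw [coeff_coe_truncD, if_pos (by omega)]
  have hmem := aeval_sub_coe_mem v hv1 hv2 (support_truncD_ge (D := degb γ + 1) hf) γ hγ
  rw [map_sub] at hmem
  rw [hfc]
  exact hmem

lemma substHom_injective (hv1 : ∀ i, v i ∈ Jd k n 1) (hv2 : ∀ i, v i - X i ∈ Jd k n 2) :
    Function.Injective (substHom v hv1) := by
  rw [injective_iff_map_eq_zero]
  intro f hf
  rw [substHom_apply] at hf
  apply eq_zero_of_forall_Jd
  intro d
  induction d with
  | zero => exact fun γ h => absurd h (by omega)
  | succ d ih =>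
      have h2 := substFun_sub_self_mem v hv1 hv2 ih
      rw [hf, zero_sub] at h2
      rw [← neg_neg f]
      exact neg_mem h2

/-- coefficientwise limit of a Cauchy sequence of power series -/
def limitSeq (F : ℕ → MvPowerSeries (Fin n) k) : MvPowerSeries (Fin n) k :=
  fun γ : Fin n →₀ ℕ => MvPowerSeries.coeff γ (F (degb γ + 1))

lemma coeff_limitSeq (F : ℕ → MvPowerSeries (Fin n) k) (γ : Fin n →₀ ℕ) :
    MvPowerSeries.coeff γ (limitSeq F) = MvPowerSeries.coeff γ (F (degb γ + 1)) := rfl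

lemma limitSeq_spec {F : ℕ → MvPowerSeries (Fin n) k} {c : ℕ}
    (hF : ∀ q, F (q + 1) - F q ∈ Jd k n (q + c)) (q : ℕ) :
    limitSeq F - F q ∈ Jd k n (q + c) := by
  have tele : ∀ a b : ℕ, a ≤ b → F b - F a ∈ Jd k n (a + c) := by
    intro a b hab
    induction b, hab using Nat.le_induction with
    | base => rw [sub_self]; exact Ideal.zero_mem _
    | succ b hab ih =>
        have : F (b + 1) - F a = (F (b + 1) - F b) + (F b - F a) := by ring
        rw [this]
        exact Ideal.add_mem _ (Jd_antitone (by omega) (hF b)) ih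
  intro γ hγ
  rw [map_sub, coeff_limitSeq]
  rcases le_total (degb γ + 1) q with h | h
  · have h1 := tele _ _ h γ (by omega)
    rw [map_sub] at h1
    have := sub_eq_zero.mp h1
    rw [this, sub_self]
  · have h1 := tele q _ h γ hγ
    rw [map_sub] at h1
    exact h1

/-- successive approximations to a preimage under substitution -/
def approxSeq (g : MvPowerSeries (Fin n) k) : ℕ → MvPowerSeries (Fin n) k
  | 0 => 0
  | (q + 1) => approxSeq g q + (g - substFun v (approxSeq g q))

set_option maxHeartbeats 1000000 in
lemma substHom_surjective (hv1 : ∀ i, v i ∈ Jd k n 1) (hv2 : ∀ i, v i - X i ∈ Jd k n 2) :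
    Function.Surjective (substHom v hv1) := by
  intro g
  set F : ℕ → MvPowerSeries (Fin n) k := approxSeq v g with hFdef
  have hFs : ∀ q, F (q + 1) = F q + (g - substFun v (F q)) := fun q => rfl
  have herr : ∀ q, g - substFun v (F q) ∈ Jd k n q := by
    intro q
    induction q with
    | zero => exact fun γ h => absurd h (by omega)
    | succ q ih =>
        have hsub : substFun v (F (q + 1)) = substFun v (F q) + substFun v (g - substFun v (F q)) := by
          rw [hFs, substFun_add]
        have hkey := substFun_sub_self_mem v hv1 hv2 ih
        have : g - substFun v (F (q + 1))
            = -(substFun v (g - substFun v (F q)) - (g - substFun v (F q))) := by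
          rw [hsub]; ring
        rw [this]
        exact neg_mem hkey
  have hcau : ∀ q, F (q + 1) - F q ∈ Jd k n (q + 0) := by
    intro q
    rw [hFs]
    have := herr q
    rw [add_sub_cancel_left, Nat.add_zero]
    exact this
  refine ⟨limitSeq F, ?_⟩
  rw [substHom_apply]
  have hdiff : ∀ q, substFun v (limitSeq F) - g ∈ Jd k n q := by
    intro q
    have h1 : limitSeq F - F q ∈ Jd k n q := by
      have := limitSeq_spec hcau q
      rwa [Nat.add_zero] at this
    have h2 : substFun v (limitSeq F) = substFun v (limitSeq F - F q) + substFun v (F q) := by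
      rw [← substFun_add]; congr 1; ring
    have h3 : substFun v (limitSeq F) - g
        = substFun v (limitSeq F - F q) + (-(g - substFun v (F q))) := by
      rw [h2]; ring
    rw [h3]
    exact Ideal.add_mem _ (substFun_mem_Jd v hv1 h1) (neg_mem (herr q))
  exact sub_eq_zero.mp (eq_zero_of_forall_Jd (fun q => hdiff q))

lemma substFun_fix_highVars {r : ℕ} (hv1 : ∀ i, v i ∈ Jd k n 1)
    (hfix : ∀ i : Fin n, r ≤ (i : ℕ) → v i = X i) {h : MvPowerSeries (Fin n) k}
    (hh : highVars r h) : substFun v h = h := by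
  ext γ
  rw [coeff_substFun]
  set p := truncD (degb γ + 1) h with hp
  have hvars : ↑p.vars ⊆ {i : Fin n | r ≤ (i : ℕ)} := by
    intro i hi
    rw [Finset.mem_coe, MvPolynomial.mem_vars] at hi
    obtain ⟨β, hβ, hiβ⟩ := hi
    by_contra hir
    simp only [Set.mem_setOf_eq, not_le] at hir
    have hcoeff : MvPowerSeries.coeff β h ≠ 0 := by
      intro hzero
      apply MvPolynomial.mem_support_iff.mp hβ
      rw [hp, coeff_truncD]
      split
      · exact hzero
      · rfl
    have := hh β hcoeff i hir
    rw [Finsupp.mem_support_iff] at hiβ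
    exact hiβ this
  have hmem : p ∈ MvPolynomial.supported k {i : Fin n | r ≤ (i : ℕ)} :=
    (MvPolynomial.mem_supported).mpr hvars
  -- two alg homs agreeing on the high X's
  have hEq : Set.EqOn (⇑(MvPolynomial.aeval v : MvPolynomial (Fin n) k →ₐ[k] MvPowerSeries (Fin n) k))
      (⇑(MvPolynomial.coeToMvPowerSeries.algHom (σ := Fin n) (R := k) k))
      (MvPolynomial.X '' {i : Fin n | r ≤ (i : ℕ)}) := by
    rintro _ ⟨i, hi, rfl⟩
    rw [MvPolynomial.aeval_X, MvPolynomial.coeToMvPowerSeries.algHom_apply,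
      MvPolynomial.coe_X, MvPowerSeries.map_X]
    exact hfix i hi
  have hmem' : p ∈ Algebra.adjoin k (MvPolynomial.X '' {i : Fin n | r ≤ (i : ℕ)}) := by
    rwa [← MvPolynomial.supported_eq_adjoin_X]
  have hagree := (AlgHom.eqOn_adjoin_iff.mpr hEq) hmem'
  rw [hagree, MvPolynomial.coeToMvPowerSeries.algHom_apply, MvPowerSeries.coeff_map,
    MvPolynomial.coeff_coe, hp, coeff_truncD, if_pos (by omega)]
  simp

end Subst

/-! ### The Morse iteration -/

lemma highVars_add {r : ℕ} {g h : MvPowerSeries (Fin n) k} (hg : highVars r g)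
    (hh : highVars r h) : highVars r (g + h) := by
  intro β hβ i hi
  by_cases hgβ : MvPowerSeries.coeff β g = 0
  · apply hh β _ i hi
    intro hc
    apply hβ
    rw [map_add, hgβ, hc, add_zero]
  · exact hg β hgβ i hi

lemma highVars_zero {r : ℕ} : highVars r (0 : MvPowerSeries (Fin n) k) := by
  intro β hβ
  exact absurd (map_zero _) hβ

section Morse

variable {k : Type*} [Field k] {n : ℕ} (a : Fin n → k) (r : ℕ) (f : MvPowerSeries (Fin n) k)

/-- the quadratic form built out of coordinates `U` -/
def QuadU (U : Fin n → MvPowerSeries (Fin n) k) : MvPowerSeries (Fin n) k :=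
  ∑ i : Fin n, if (i : ℕ) < r then C (a i) * (U i) ^ 2 else 0

/-- the completing-the-square iteration -/
def morse : ℕ → ((Fin n → MvPowerSeries (Fin n) k) × MvPowerSeries (Fin n) k)
  | 0 => (fun i => X i, 0)
  | (q + 1) =>
      let U := (morse q).1
      let H := (morse q).2
      let E := f - QuadU a r U - H
      (fun i => U i + C ((2 * a i)⁻¹) * splitW r E i, H + splitH r E)

lemma morse_succ_fst (q : ℕ) : (morse a r f (q + 1)).1
    = fun i => (morse a r f q).1 i
        + C ((2 * a i)⁻¹)
          * splitW r (f - QuadU a r (morse a r f q).1 - (morse a r f q).2) i := rfl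

lemma morse_succ_snd (q : ℕ) : (morse a r f (q + 1)).2
    = (morse a r f q).2
        + splitH r (f - QuadU a r (morse a r f q).1 - (morse a r f q).2) := rfl

lemma morse_inv (h2 : (2 : k) ≠ 0) (ha : ∀ i : Fin n, (i : ℕ) < r → a i ≠ 0)
    (hfQ : f - QuadU a r (fun i => X i) ∈ Jd k n 3) (q : ℕ) :
    (∀ i, (morse a r f q).1 i ∈ Jd k n 1) ∧ (∀ i, (morse a r f q).1 i - X i ∈ Jd k n 2) ∧
    highVars r (morse a r f q).2 ∧ (morse a r f q).2 ∈ Jd k n 3 ∧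
    f - QuadU a r (morse a r f q).1 - (morse a r f q).2 ∈ Jd k n (q + 3) := by
  induction q with
  | zero =>
      refine ⟨fun i => X_mem_Jd i, fun i => ?_, highVars_zero, Ideal.zero_mem _, ?_⟩
      · show (X i : MvPowerSeries (Fin n) k) - X i ∈ Jd k n 2
        rw [sub_self]; exact Ideal.zero_mem _
      · show f - QuadU a r (fun i => X i) - 0 ∈ Jd k n 3
        rw [sub_zero]; exact hfQ
  | succ q ih =>
      obtain ⟨ih1, ih2, ihH, ihH3, ihE⟩ := ih
      set U : Fin n → MvPowerSeries (Fin n) k := (morse a r f q).1 with hU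
      set H : MvPowerSeries (Fin n) k := (morse a r f q).2 with hH
      set E : MvPowerSeries (Fin n) k := f - QuadU a r U - H with hE
      set w : Fin n → MvPowerSeries (Fin n) k := splitW r E with hw
      set e' : MvPowerSeries (Fin n) k := splitH r E with he'
      set c : Fin n → MvPowerSeries (Fin n) k :=
        fun i => C ((2 * a i)⁻¹) * w i with hc
      have hwq : ∀ i, w i ∈ Jd k n (q + 2) := fun i =>
        splitW_mem_Jd (q := q + 2) (by rw [show q + 2 + 1 = q + 3 from rfl]; exact ihE) i
      have he'q : e' ∈ Jd k n (q + 3) := splitH_mem_Jd ihE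
      have hcq : ∀ i, c i ∈ Jd k n (q + 2) := fun i => Ideal.mul_mem_left _ _ (hwq i)
      have hfst : (morse a r f (q + 1)).1 = fun i => U i + c i := morse_succ_fst a r f q
      have hsnd : (morse a r f (q + 1)).2 = H + e' := morse_succ_snd a r f q
      refine ⟨?_, ?_, ?_, ?_, ?_⟩
      · intro i
        rw [hfst]
        exact Ideal.add_mem _ (ih1 i) (Jd_antitone (by omega) (hcq i))
      · intro i
        rw [hfst]
        have : U i + c i - X i = (U i - X i) + c i := by ring
        rw [this]
        exact Ideal.add_mem _ (ih2 i) (Jd_antitone (by omega) (hcq i))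
      · rw [hsnd]
        exact highVars_add ihH (highVars_splitH r E)
      · rw [hsnd]
        exact Ideal.add_mem _ ihH3 (Jd_antitone (by omega) he'q)
      · rw [hfst, hsnd]
        have hterm : ∀ i : Fin n, (i : ℕ) < r →
            C (a i) * (U i + c i) ^ 2
              = C (a i) * (U i) ^ 2 + X i * w i
                + ((U i - X i) * w i + C (a i) * (c i) ^ 2) := by
          intro i hi
          have hkey : (C (a i) : MvPowerSeries (Fin n) k) * 2 * C ((2 * a i)⁻¹) = 1 := by
            have h2' : (2 : MvPowerSeries (Fin n) k) = C 2 :=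
              (map_ofNat (C) 2).symm
            rw [h2', ← map_mul, ← map_mul, ← map_one (C)]
            congr 1
            rw [mul_comm (a i) 2, mul_inv_cancel₀ (mul_ne_zero h2 (ha i hi))]
          have hci : c i = C ((2 * a i)⁻¹) * w i := rfl
          have hexp : C (a i) * (U i + c i) ^ 2
              = C (a i) * (U i) ^ 2
                + (C (a i) * 2 * C ((2 * a i)⁻¹)) * (U i * w i)
                + C (a i) * (c i) ^ 2 := by
            rw [hci]; ring
          rw [hexp, hkey, one_mul]
          ring
        have hQuad : QuadU a r (fun i => U i + c i)
            = QuadU a r U + (∑ i : Fin n, if (i : ℕ) < r then X i * w i else 0)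
              + ∑ i : Fin n, if (i : ℕ) < r
                  then (U i - X i) * w i + C (a i) * (c i) ^ 2 else 0 := by
          unfold QuadU
          rw [← Finset.sum_add_distrib, ← Finset.sum_add_distrib]
          apply Finset.sum_congr rfl
          intro i _
          by_cases hi : (i : ℕ) < r
          · rw [if_pos hi, if_pos hi, if_pos hi, if_pos hi, hterm i hi]
          · rw [if_neg hi, if_neg hi, if_neg hi, if_neg hi]
            ring
        have hsplitE : E = (∑ i : Fin n, if (i : ℕ) < r then X i * w i else 0) + e' := by
          rw [hw, he']
          exact split_eq r E
        have hstep : f - QuadU a r (fun i => U i + c i) - (H + e')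
            = -(∑ i : Fin n, if (i : ℕ) < r
                then (U i - X i) * w i + C (a i) * (c i) ^ 2 else 0) := by
          rw [hQuad]
          have hre : f - (QuadU a r U + (∑ i : Fin n, if (i : ℕ) < r then X i * w i else 0)
                + ∑ i : Fin n, if (i : ℕ) < r
                    then (U i - X i) * w i + C (a i) * (c i) ^ 2 else 0) - (H + e')
              = (f - QuadU a r U - H)
                - ((∑ i : Fin n, if (i : ℕ) < r then X i * w i else 0) + e')
                - ∑ i : Fin n, if (i : ℕ) < r
                    then (U i - X i) * w i + C (a i) * (c i) ^ 2 else 0 := by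
            ring
          rw [hre, ← hE, ← hsplitE, sub_self, zero_sub]
        rw [hstep]
        apply neg_mem
        apply Ideal.sum_mem
        intro i _
        by_cases hi : (i : ℕ) < r
        · rw [if_pos hi]
          apply Ideal.add_mem
          · exact Jd_antitone (by omega) (mul_mem_Jd (ih2 i) (hwq i))
          · apply Ideal.mul_mem_left
            rw [pow_two]
            exact Jd_antitone (by omega) (mul_mem_Jd (hcq i) (hcq i))
        · rw [if_neg hi]
          exact Ideal.zero_mem _

/-- limit coordinates -/
def uLim : Fin n → MvPowerSeries (Fin n) k :=
  fun i => limitSeq (fun q => (morse a r f q).1 i)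

/-- limit high-variables part -/
def hLim : MvPowerSeries (Fin n) k := limitSeq (fun q => (morse a r f q).2)

variable {a r f}

lemma morse_fst_cauchy (h2 : (2 : k) ≠ 0) (ha : ∀ i : Fin n, (i : ℕ) < r → a i ≠ 0)
    (hfQ : f - QuadU a r (fun i => X i) ∈ Jd k n 3) (i : Fin n) (q : ℕ) :
    (morse a r f (q + 1)).1 i - (morse a r f q).1 i ∈ Jd k n (q + 2) := by
  have hinv := morse_inv a r f h2 ha hfQ q
  have hfst : (morse a r f (q + 1)).1 i = (morse a r f q).1 i
      + C ((2 * a i)⁻¹)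
        * splitW r (f - QuadU a r (morse a r f q).1 - (morse a r f q).2) i := by
    rw [morse_succ_fst a r f q]
  rw [hfst, add_sub_cancel_left]
  exact Ideal.mul_mem_left _ _
    (splitW_mem_Jd (q := q + 2) (by exact hinv.2.2.2.2) i)

lemma morse_snd_cauchy (h2 : (2 : k) ≠ 0) (ha : ∀ i : Fin n, (i : ℕ) < r → a i ≠ 0)
    (hfQ : f - QuadU a r (fun i => X i) ∈ Jd k n 3) (q : ℕ) :
    (morse a r f (q + 1)).2 - (morse a r f q).2 ∈ Jd k n (q + 3) := by
  have hinv := morse_inv a r f h2 ha hfQ q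
  rw [morse_succ_snd a r f q, add_sub_cancel_left]
  exact splitH_mem_Jd hinv.2.2.2.2

variable (h2 : (2 : k) ≠ 0) (ha : ∀ i : Fin n, (i : ℕ) < r → a i ≠ 0)
  (hfQ : f - QuadU a r (fun i => X i) ∈ Jd k n 3)

include h2 ha hfQ

lemma uLim_sub_mem (i : Fin n) (q : ℕ) :
    uLim a r f i - (morse a r f q).1 i ∈ Jd k n (q + 2) :=
  limitSeq_spec (c := 2) (fun q => morse_fst_cauchy h2 ha hfQ i q) q

lemma hLim_sub_mem (q : ℕ) : hLim a r f - (morse a r f q).2 ∈ Jd k n (q + 3) :=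
  limitSeq_spec (c := 3) (fun q => morse_snd_cauchy h2 ha hfQ q) q

lemma uLim_mem_J1 (i : Fin n) : uLim a r f i ∈ Jd k n 1 := by
  have h0 := uLim_sub_mem h2 ha hfQ i 0
  have hX : (morse a r f 0).1 i = X i := rfl
  rw [hX] at h0
  have : uLim a r f i = (uLim a r f i - X i) + X i := by ring
  rw [this]
  exact Ideal.add_mem _ (Jd_antitone (by omega) h0) (X_mem_Jd i)

lemma uLim_sub_X_mem (i : Fin n) : uLim a r f i - X i ∈ Jd k n 2 := by
  have h0 := uLim_sub_mem h2 ha hfQ i 0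
  have hX : (morse a r f 0).1 i = X i := rfl
  rwa [hX] at h0

lemma hLim_highVars : highVars r (hLim a r f) := by
  intro β hβ i hir
  have hco : MvPowerSeries.coeff β (hLim a r f)
      = MvPowerSeries.coeff β ((morse a r f (degb β + 1)).2) := rfl
  rw [hco] at hβ
  exact (morse_inv a r f h2 ha hfQ (degb β + 1)).2.2.1 β hβ i hir

lemma hLim_mem_J3 : hLim a r f ∈ Jd k n 3 := by
  intro γ hγ
  have hco : MvPowerSeries.coeff γ (hLim a r f)
      = MvPowerSeries.coeff γ ((morse a r f (degb γ + 1)).2) := rfl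
  rw [hco]
  exact (morse_inv a r f h2 ha hfQ (degb γ + 1)).2.2.2.1 γ hγ

lemma morse_main : f = QuadU a r (uLim a r f) + hLim a r f := by
  have hall : ∀ d, f - QuadU a r (uLim a r f) - hLim a r f ∈ Jd k n d := by
    intro d
    apply Jd_antitone (show d ≤ d + 3 by omega)
    have hinv := morse_inv a r f h2 ha hfQ d
    have hdecomp : f - QuadU a r (uLim a r f) - hLim a r f
        = (f - QuadU a r (morse a r f d).1 - (morse a r f d).2)
          + (QuadU a r (morse a r f d).1 - QuadU a r (uLim a r f))
          + ((morse a r f d).2 - hLim a r f) := by ring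
    rw [hdecomp]
    refine Ideal.add_mem _ (Ideal.add_mem _ hinv.2.2.2.2 ?_) ?_
    · unfold QuadU
      rw [← Finset.sum_sub_distrib]
      apply Ideal.sum_mem
      intro i _
      by_cases hi : (i : ℕ) < r
      · rw [if_pos hi, if_pos hi]
        have hfac : C (a i) * ((morse a r f d).1 i) ^ 2
              - C (a i) * (uLim a r f i) ^ 2
            = C (a i) * (((morse a r f d).1 i - uLim a r f i)
                * ((morse a r f d).1 i + uLim a r f i)) := by ring
        rw [hfac]
        apply Ideal.mul_mem_left
        have hd1 : (morse a r f d).1 i - uLim a r f i ∈ Jd k n (d + 2) := by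
          have := uLim_sub_mem h2 ha hfQ i d
          have hneg : (morse a r f d).1 i - uLim a r f i
              = -(uLim a r f i - (morse a r f d).1 i) := by ring
          rw [hneg]
          exact neg_mem this
        have hd2 : (morse a r f d).1 i + uLim a r f i ∈ Jd k n 1 :=
          Ideal.add_mem _ (hinv.1 i) (uLim_mem_J1 h2 ha hfQ i)
        exact Jd_antitone (by omega) (mul_mem_Jd hd1 hd2)
      · rw [if_neg hi, if_neg hi, sub_self]
        exact Ideal.zero_mem _
    · have hneg : (morse a r f d).2 - hLim a r f = -(hLim a r f - (morse a r f d).2) := by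
        ring
      rw [hneg]
      exact neg_mem (hLim_sub_mem h2 ha hfQ d)
  have h0 := eq_zero_of_forall_Jd hall
  rw [sub_sub, sub_eq_zero] at h0
  exact h0

end Morse

end MorseAux

/-- Formal Morse lemma in characteristic ≠ 2: if `f ∈ m²` has degree-2 part
`f₂ = Σ_{i<r} aᵢxᵢ²` with all `aᵢ ≠ 0`, then there is a `k`-algebra automorphism `φ` of `R`
fixing `x_{r+1},…,xₙ` with `φ(f) = Σ_{i<r} aᵢxᵢ² + h(x_{r+1},…,xₙ)` for some `h ∈ m³`. -/
theorem stmt5 {k : Type*} [Field k] (h2 : (2 : k) ≠ 0) {n r : ℕ} (hr : r ≤ n)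
    (f : MvPowerSeries (Fin n) k) (hf : f ∈ mIdeal k n ^ 2)
    (a : Fin n → k) (ha : ∀ i : Fin n, (i : ℕ) < r → a i ≠ 0)
    (hf2 : part2 f = ∑ i : Fin n, if (i : ℕ) < r then (C (a i) : MvPowerSeries (Fin n) k) * X i ^ 2 else 0) :
    ∃ φ : MvPowerSeries (Fin n) k ≃ₐ[k] MvPowerSeries (Fin n) k,
      (∀ i : Fin n, r ≤ (i : ℕ) → φ (X i) = X i) ∧
      ∃ h : MvPowerSeries (Fin n) k, highVars r h ∧ h ∈ mIdeal k n ^ 3 ∧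
        φ f = (∑ i : Fin n, if (i : ℕ) < r then (C (a i) : MvPowerSeries (Fin n) k) * X i ^ 2 else 0) + h := by
  classical
  have hQQ : MorseAux.QuadU a r (fun i => X i)
      = ∑ i : Fin n, if (i : ℕ) < r then C (a i) * X i ^ 2 else 0 := rfl
  have hfJ2 : f ∈ MorseAux.Jd k n 2 := MorseAux.mIdeal_pow_le_Jd 2 hf
  have hfQ : f - MorseAux.QuadU a r (fun i => X i) ∈ MorseAux.Jd k n 3 := by
    intro γ hγ
    rw [map_sub, hQQ, ← hf2]
    have hpart : MvPowerSeries.coeff γ (part2 f)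
        = if MorseAux.degb γ = 2 then MvPowerSeries.coeff γ f else 0 := rfl
    rw [hpart]
    by_cases hdeg : MorseAux.degb γ = 2
    · rw [if_pos hdeg, sub_self]
    · rw [if_neg hdeg, sub_zero]
      exact hfJ2 γ (by omega)
  set v : Fin n → MvPowerSeries (Fin n) k :=
    fun i => if (i : ℕ) < r then MorseAux.uLim a r f i else X i with hv
  have hvi : ∀ i : Fin n, v i = if (i : ℕ) < r then MorseAux.uLim a r f i else X i :=
    fun i => rfl
  have hv1 : ∀ i, v i ∈ MorseAux.Jd k n 1 := by
    intro i
    rw [hvi i]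
    split
    · exact MorseAux.uLim_mem_J1 h2 ha hfQ i
    · exact MorseAux.X_mem_Jd i
  have hv2 : ∀ i, v i - X i ∈ MorseAux.Jd k n 2 := by
    intro i
    rw [hvi i]
    split
    · exact MorseAux.uLim_sub_X_mem h2 ha hfQ i
    · rw [sub_self]; exact Ideal.zero_mem _
  have hfixv : ∀ i : Fin n, r ≤ (i : ℕ) → v i = X i := by
    intro i hi
    rw [hvi i, if_neg (by omega)]
  have hbij : Function.Bijective (MorseAux.substHom v hv1) :=
    ⟨MorseAux.substHom_injective v hv1 hv2, MorseAux.substHom_surjective v hv1 hv2⟩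
  refine ⟨(AlgEquiv.ofBijective (MorseAux.substHom v hv1) hbij).symm, ?_, MorseAux.hLim a r f,
    MorseAux.hLim_highVars h2 ha hfQ,
    MorseAux.Jd_le_mIdeal_pow 3 (MorseAux.hLim_mem_J3 h2 ha hfQ), ?_⟩
  · intro i hi
    rw [AlgEquiv.symm_apply_eq]
    show X i = MorseAux.substHom v hv1 (X i)
    rw [MorseAux.substHom_apply, MorseAux.substFun_X v hv1 i, hfixv i hi]
  · rw [AlgEquiv.symm_apply_eq]
    have hψ : MorseAux.substHom v hv1
        ((∑ i : Fin n, if (i : ℕ) < r then C (a i) * X i ^ 2 else 0)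
          + MorseAux.hLim a r f)
        = MorseAux.QuadU a r (MorseAux.uLim a r f) + MorseAux.hLim a r f := by
      rw [map_add]
      congr 1
      · rw [map_sum]
        unfold MorseAux.QuadU
        apply Finset.sum_congr rfl
        intro i _
        by_cases hi : (i : ℕ) < r
        · rw [if_pos hi, if_pos hi, map_mul, map_pow]
          have hC : MorseAux.substHom v hv1 (C (a i)) = C (a i) :=
            MorseAux.substFun_C v (a i)
          have hX : MorseAux.substHom v hv1 (X i) = MorseAux.uLim a r f i := by
            rw [MorseAux.substHom_apply, MorseAux.substFun_X v hv1 i, hvi i, if_pos hi]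
          rw [hC, hX]
        · rw [if_neg hi, if_neg hi, map_zero]
      · exact MorseAux.substFun_fix_highVars v hv1 hfixv (MorseAux.hLim_highVars h2 ha hfQ)
    show f = MorseAux.substHom v hv1 _
    rw [hψ]
    exact MorseAux.morse_main h2 ha hfQ
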